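/- For Hankel-type determinants built from c : ℕ → ℝ, the identity E^1_n H^0_n − E^0_n H^1_n = G^0_{n+1} H^1_{n-1} holds for all n ≥ 2. -/

import Mathlib

/-- Hankel determinant `H^m_n = det(c_{i+j+m})`. -/
noncomputable def Hk (c : ℕ → ℝ) (m n : ℕ) : ℝ :=
  (Matrix.of fun i j : Fin n => c (i.val + j.val + m)).det

/-- `G^m_n`: the Hankel determinant `H^m_n` with its last row
`(c_{m+n-1},…,c_{m+2n-2})` replaced by `(c_{m+n},…,c_{m+2n-1})`;
by convention `G^m_0 = 0`. -/
noncomputable def Gk (c : ℕ → ℝ) (m n : ℕ) : ℝ :=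
  if n = 0 then 0 else
  (Matrix.of fun i j : Fin n =>
    if i.val = n - 1 then c (m + n + j.val) else c (i.val + j.val + m)).det

/-- `E^m_n`: determinant of the `n×n` matrix with rows
`(c_{m+k},…,c_{m+k+n-2}, c_{m+k+n+1})`, i.e. the last column advanced by 2. -/
noncomputable def Ek (c : ℕ → ℝ) (m n : ℕ) : ℝ :=
  (Matrix.of fun i j : Fin n =>
    if j.val = n - 1 then c (m + i.val + n + 1) else c (m + i.val + j.val)).det

/-- `F^m_n`: determinant of the `n×n` matrix with rows
`(c_{m+k},…,c_{m+k+n-3}, c_{m+k+n-1}, c_{m+k+n})`, i.e. column `n−2` skipped;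
by convention `F^m_1 = 0`. -/
noncomputable def Fk (c : ℕ → ℝ) (m n : ℕ) : ℝ :=
  if n = 1 then 0 else
  (Matrix.of fun i j : Fin n =>
    if n - 2 ≤ j.val then c (m + i.val + j.val + 1) else c (m + i.val + j.val)).det

/-- `S^m_n`: determinant of `(c_{m+σ(i)+σ(j)})` where `σ(i) = i` for `i ≤ n−2`
and `σ(n−1) = n`. -/
noncomputable def Sk (c : ℕ → ℝ) (m n : ℕ) : ℝ :=
  (Matrix.of fun i j : Fin n =>
    c (m + (if i.val = n - 1 then n else i.val) +
        (if j.val = n - 1 then n else j.val))).det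


open Matrix Finset

variable {ι : Type*} [Fintype ι] [DecidableEq ι]

private lemma perm_eq_one_or_swap (σ : Equiv.Perm ι) {c1 c2 : ι} (h : c1 ≠ c2)
    (hfix : ∀ x, x ≠ c1 → x ≠ c2 → σ x = x) : σ = 1 ∨ σ = Equiv.swap c1 c2 := by
  have h1 : σ c1 = c1 ∨ σ c1 = c2 := by
    by_contra hc
    push_neg at hc
    exact hc.1 (σ.injective (hfix (σ c1) hc.1 hc.2))
  have h2 : σ c2 = c1 ∨ σ c2 = c2 := by
    by_contra hc
    push_neg at hc
    exact hc.2 (σ.injective (hfix (σ c2) hc.1 hc.2))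
  rcases h1 with h1 | h1
  · left
    ext x
    rcases eq_or_ne x c1 with rfl | hx1
    · simpa using h1
    rcases eq_or_ne x c2 with rfl | hx2
    · rcases h2 with h2 | h2
      · exact absurd (σ.injective (h1.trans h2.symm)) h
      · simpa using h2
    · simpa using hfix x hx1 hx2
  · right
    have h2' : σ c2 = c1 := by
      rcases h2 with h2 | h2
      · exact h2
      · exact absurd (σ.injective (h1.trans h2.symm)) h
    ext x
    rcases eq_or_ne x c1 with rfl | hx1
    · simp [h1, Equiv.swap_apply_left]
    rcases eq_or_ne x c2 with rfl | hx2
    · simp [h2', Equiv.swap_apply_right]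
    · simp [hfix x hx1 hx2, Equiv.swap_apply_of_ne_of_ne hx1 hx2]

private lemma det_one_upd2 {R : Type*} [CommRing R] (u v : ι → R) {c1 c2 : ι} (h : c1 ≠ c2) :
    (((1 : Matrix ι ι R).updateCol c1 u).updateCol c2 v).det
      = u c1 * v c2 - u c2 * v c1 := by
  classical
  set M := ((1 : Matrix ι ι R).updateCol c1 u).updateCol c2 v with hM
  have hMapp : ∀ i j, M i j = if j = c2 then v i else if j = c1 then u i else
      if i = j then 1 else 0 := by
    intro i j
    simp only [hM, updateCol_apply, one_apply]
  have hswap : (Equiv.swap c1 c2) ≠ (1 : Equiv.Perm ι) := by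
    intro e
    apply h
    have := congrArg (fun σ : Equiv.Perm ι => σ c1) e
    simpa [Equiv.swap_apply_left] using this.symm
  rw [det_apply]
  rw [← Finset.sum_subset (Finset.subset_univ ({1, Equiv.swap c1 c2} : Finset (Equiv.Perm ι)))
      ?_]
  · rw [Finset.sum_pair hswap.symm]
    have t1 : ∏ i, M ((1 : Equiv.Perm ι) i) i = u c1 * v c2 := by
      simp only [Equiv.Perm.one_apply]
      rw [← Finset.mul_prod_erase Finset.univ _ (Finset.mem_univ c1),
        ← Finset.mul_prod_erase _ _ (Finset.mem_erase.mpr ⟨h.symm, Finset.mem_univ c2⟩),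
        Finset.prod_eq_one]
      · rw [hMapp, hMapp, if_neg h, if_pos rfl, if_pos rfl]
        ring
      · intro x hx
        simp only [Finset.mem_erase] at hx
        rw [hMapp, if_neg hx.1, if_neg hx.2.1, if_pos rfl]
    have t2 : ∏ i, M ((Equiv.swap c1 c2) i) i = u c2 * v c1 := by
      rw [← Finset.mul_prod_erase Finset.univ _ (Finset.mem_univ c1),
        ← Finset.mul_prod_erase _ _ (Finset.mem_erase.mpr ⟨h.symm, Finset.mem_univ c2⟩),
        Finset.prod_eq_one]
      · rw [Equiv.swap_apply_left, Equiv.swap_apply_right, hMapp, hMapp,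
          if_neg h, if_pos rfl, if_pos rfl]
        ring
      · intro x hx
        simp only [Finset.mem_erase] at hx
        rw [Equiv.swap_apply_of_ne_of_ne hx.2.1 hx.1, hMapp, if_neg hx.1, if_neg hx.2.1,
          if_pos rfl]
    rw [t1, t2]
    simp [Equiv.Perm.sign_swap h, sub_eq_add_neg]
  · intro σ _ hσ
    simp only [Finset.mem_insert, Finset.mem_singleton] at hσ
    push_neg at hσ
    have : ∃ x, x ≠ c1 ∧ x ≠ c2 ∧ σ x ≠ x := by
      by_contra hc
      push_neg at hc
      rcases perm_eq_one_or_swap σ h (fun x h1 h2 => hc x h1 h2) with h' | h'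
      · exact hσ.1 h'
      · exact hσ.2 h'
    obtain ⟨x, hx1, hx2, hx3⟩ := this
    have : M (σ x) x = 0 := by
      rw [hMapp, if_neg hx2, if_neg hx1, if_neg hx3]
    have hz : (∏ i, M (σ i) i) = 0 := Finset.prod_eq_zero (Finset.mem_univ x) this
    rw [hz]
    simp

private lemma updateColumn_comm {R : Type*} (A : Matrix ι ι R) (u v : ι → R) {c1 c2 : ι}
    (h : c1 ≠ c2) :
    (A.updateCol c1 u).updateCol c2 v = (A.updateCol c2 v).updateCol c1 u := by
  ext i j
  simp only [updateCol_apply]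
  split_ifs with ha hb <;> simp_all

private lemma mul_upd2 {R : Type*} [CommRing R] (A : Matrix ι ι R) (u v : ι → R) {c1 c2 : ι}
    (h : c1 ≠ c2) :
    A * (((1 : Matrix ι ι R).updateCol c1 u).updateCol c2 v)
      = (A.updateCol c1 (A *ᵥ u)).updateCol c2 (A *ᵥ v) := by
  ext i j
  rw [mul_apply]
  rcases eq_or_ne j c2 with rfl | h2
  · simp [updateCol_apply, mulVec, dotProduct]
  rcases eq_or_ne j c1 with rfl | h1
  · simp [updateCol_apply, h2, h, mulVec, dotProduct]
  · simp [updateCol_apply, h1, h2, one_apply, mul_ite]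

private lemma jacobi_domain {R : Type*} [CommRing R] [IsDomain R] (A : Matrix ι ι R)
    (hA : A.det ≠ 0) (r1 r2 c1 c2 : ι) (h : c1 ≠ c2) :
    adjugate A c1 r1 * adjugate A c2 r2 - adjugate A c2 r1 * adjugate A c1 r2
      = A.det * ((A.updateCol c1 (Pi.single r1 1)).updateCol c2 (Pi.single r2 1)).det := by
  apply mul_left_cancel₀ hA
  have hu : ∀ r : ι, A *ᵥ (fun i => adjugate A i r) = A.det • (Pi.single r 1 : ι → R) := by
    intro r
    funext i
    have := congrArg (fun M : Matrix ι ι R => M i r) (mul_adjugate A)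
    simp only [mul_apply, Matrix.smul_apply, one_apply, smul_eq_mul] at this
    simpa [mulVec, dotProduct, Pi.single_apply] using this
  calc A.det * (adjugate A c1 r1 * adjugate A c2 r2 - adjugate A c2 r1 * adjugate A c1 r2)
      = A.det * (((1 : Matrix ι ι R).updateCol c1 (fun i => adjugate A i r1)).updateCol c2
          (fun i => adjugate A i r2)).det := by
        rw [det_one_upd2 _ _ h]
    _ = (A * (((1 : Matrix ι ι R).updateCol c1 (fun i => adjugate A i r1)).updateCol c2
          (fun i => adjugate A i r2))).det := by rw [det_mul]
    _ = ((A.updateCol c1 (A.det • (Pi.single r1 1 : ι → R))).updateCol c2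
          (A.det • (Pi.single r2 1 : ι → R))).det := by rw [mul_upd2 _ _ _ h, hu, hu]
    _ = A.det * (A.det * ((A.updateCol c1 (Pi.single r1 1)).updateCol c2
          (Pi.single r2 1)).det) := by
        rw [det_updateCol_smul, updateColumn_comm _ _ _ h, det_updateCol_smul,
          updateColumn_comm _ _ _ h.symm]

private lemma jacobi_ring {R : Type*} [CommRing R] (A : Matrix ι ι R)
    (r1 r2 c1 c2 : ι) (h : c1 ≠ c2) :
    adjugate A c1 r1 * adjugate A c2 r2 - adjugate A c2 r1 * adjugate A c1 r2
      = A.det * ((A.updateCol c1 (Pi.single r1 1)).updateCol c2 (Pi.single r2 1)).det := by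
  let A' := mvPolynomialX ι ι ℤ
  have key := jacobi_domain A' (det_mvPolynomialX_ne_zero ι ℤ) r1 r2 c1 c2 h
  let φ : MvPolynomial (ι × ι) ℤ →+* R :=
    (MvPolynomial.aeval fun p : ι × ι => A p.1 p.2).toRingHom
  have h0 : φ.mapMatrix A' = A := by
    rw [RingHom.mapMatrix_apply]
    exact mvPolynomialX_map_eval₂ _ A
  have hsingle : ∀ r : ι, (⇑φ ∘ Pi.single r (1 : MvPolynomial (ι × ι) ℤ))
      = (Pi.single r (1 : R) : ι → R) := by
    intro r
    funext i
    simp [Pi.single_apply, apply_ite φ]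
  have key2 := congrArg φ key
  simp only [_root_.map_mul, _root_.map_sub] at key2
  have hadj : ∀ i j : ι, φ (adjugate A' i j) = adjugate A i j := by
    intro i j
    calc φ (adjugate A' i j) = (φ.mapMatrix (adjugate A')) i j := rfl
      _ = (Matrix.adjugate (φ.mapMatrix A')) i j := by rw [RingHom.map_adjugate]
      _ = adjugate A i j := by rw [h0]
  have hdet : φ A'.det = A.det := by rw [RingHom.map_det, h0]
  have hdet2 : φ (((A'.updateCol c1 (Pi.single r1 1)).updateCol c2
      (Pi.single r2 1)).det)
      = ((A.updateCol c1 (Pi.single r1 1)).updateCol c2 (Pi.single r2 1)).det := by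
    rw [RingHom.map_det]
    congr 1
    rw [RingHom.mapMatrix_apply, map_updateCol, map_updateCol, hsingle, hsingle,
      ← RingHom.mapMatrix_apply, h0]
  rw [hadj, hadj, hadj, hadj, hdet, hdet2] at key2
  exact key2

/-- `E¹_n H⁰_n − E⁰_n H¹_n = G⁰_{n+1} H¹_{n-1}` for `n ≥ 2`. -/
theorem E_difference_identity (c : ℕ → ℝ) (n : ℕ) (hn : 2 ≤ n) :
    Ek c 1 n * Hk c 0 n - Ek c 0 n * Hk c 1 n = Gk c 0 (n + 1) * Hk c 1 (n - 1) := by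
  obtain ⟨m, rfl⟩ : ∃ m, n = m + 2 := ⟨n - 2, by omega⟩
  set A : Matrix (Fin (m + 3)) (Fin (m + 3)) ℝ := Matrix.of fun i j =>
      if (i : ℕ) = (m + 3) - 1 then c (0 + (m + 3) + (j : ℕ)) else c ((i : ℕ) + (j : ℕ) + 0)
    with hAdef
  set r1 : Fin (m + 3) := ⟨m + 1, by omega⟩ with hr1def
  set r2 : Fin (m + 3) := Fin.last (m + 2) with hr2def
  set c1 : Fin (m + 3) := 0 with hc1def
  set c2 : Fin (m + 3) := Fin.last (m + 2) with hc2def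
  have hcc : c1 ≠ c2 := by
    rw [hc1def, hc2def, Fin.ne_iff_vne]
    simp
  have hr1v : (r1 : ℕ) = m + 1 := rfl
  have hr2v : (r2 : ℕ) = m + 2 := rfl
  have hc1v : (c1 : ℕ) = 0 := rfl
  have hc2v : (c2 : ℕ) = m + 2 := rfl
  have hAapp : ∀ i j : Fin (m + 3),
      A i j = if (i : ℕ) = m + 2 then c (m + 3 + (j : ℕ)) else c ((i : ℕ) + (j : ℕ)) := by
    intro i j
    rw [hAdef, Matrix.of_apply]
    rcases eq_or_ne (i : ℕ) (m + 2) with hi | hi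
    · rw [if_pos (by omega), if_pos hi]
      congr 1
      omega
    · rw [if_neg (by omega), if_neg hi]
      congr 1
  have hsA : ∀ i : Fin (m + 2), ((r1.succAbove i : Fin (m + 3)) : ℕ)
      = if (i : ℕ) < m + 1 then (i : ℕ) else (i : ℕ) + 1 := by
    intro i
    rw [Fin.succAbove, apply_ite Fin.val, Fin.coe_castSucc, Fin.val_succ]
    congr 1
  have hG : A.det = Gk c 0 (m + 3) := by
    rw [Gk, if_neg (by omega)]
  -- minors
  have hEk1 : (A.submatrix r1.succAbove c1.succAbove).det = Ek c 1 (m + 2) := by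
    have : A.submatrix r1.succAbove c1.succAbove
        = (Matrix.of fun i j : Fin (m + 2) =>
            if (j : ℕ) = (m + 2) - 1 then c (1 + (i : ℕ) + (m + 2) + 1)
            else c (1 + (i : ℕ) + (j : ℕ)))ᵀ := by
      ext i j
      rw [Matrix.submatrix_apply, Matrix.transpose_apply, Matrix.of_apply, hc1def,
        Fin.succAbove_zero, hAapp]
      rcases Nat.lt_or_ge (i : ℕ) (m + 1) with hi | hi
      · rw [if_neg (by rw [hsA i, if_pos hi]; omega), if_neg (by omega)]
        rw [Fin.val_succ]
        congr 1
        rw [hsA i, if_pos hi]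
        omega
      · have hi' : (i : ℕ) = m + 1 := by omega
        rw [if_pos (by rw [hsA i, if_neg (by omega)]; omega), if_pos (by omega)]
        rw [Fin.val_succ]
        congr 1
        omega
    rw [this, Matrix.det_transpose, Ek]
  have hEk0 : (A.submatrix r1.succAbove c2.succAbove).det = Ek c 0 (m + 2) := by
    have : A.submatrix r1.succAbove c2.succAbove
        = (Matrix.of fun i j : Fin (m + 2) =>
            if (j : ℕ) = (m + 2) - 1 then c (0 + (i : ℕ) + (m + 2) + 1)
            else c (0 + (i : ℕ) + (j : ℕ)))ᵀ := by
      ext i j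
      rw [Matrix.submatrix_apply, Matrix.transpose_apply, Matrix.of_apply, hc2def,
        Fin.succAbove_last, hAapp]
      rcases Nat.lt_or_ge (i : ℕ) (m + 1) with hi | hi
      · rw [if_neg (by rw [hsA i, if_pos hi]; omega), if_neg (by omega)]
        rw [Fin.coe_castSucc]
        congr 1
        rw [hsA i, if_pos hi]
        omega
      · have hi' : (i : ℕ) = m + 1 := by omega
        rw [if_pos (by rw [hsA i, if_neg (by omega)]; omega), if_pos (by omega)]
        rw [Fin.coe_castSucc]
        congr 1
        omega
    rw [this, Matrix.det_transpose, Ek]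
  have hHk0 : (A.submatrix r2.succAbove c2.succAbove).det = Hk c 0 (m + 2) := by
    rw [Hk]
    congr 1
    ext i j
    rw [Matrix.submatrix_apply, Matrix.of_apply, hr2def, hc2def, Fin.succAbove_last, hAapp]
    rw [if_neg (by rw [Fin.coe_castSucc]; omega)]
    congr 1
  have hHk1 : (A.submatrix r2.succAbove c1.succAbove).det = Hk c 1 (m + 2) := by
    rw [Hk]
    congr 1
    ext i j
    rw [Matrix.submatrix_apply, Matrix.of_apply, hr2def, hc1def, Fin.succAbove_last,
      Fin.succAbove_zero, hAapp]
    rw [if_neg (by rw [Fin.coe_castSucc]; omega)]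
    congr 1
  set M : Matrix (Fin (m + 3)) (Fin (m + 3)) ℝ :=
    (A.updateCol c1 (Pi.single r1 1)).updateCol c2 (Pi.single r2 1) with hMdef
  have hM0 : ∀ i : Fin (m + 3), M i 0 = if i = r1 then 1 else 0 := by
    intro i
    rw [hMdef, Matrix.updateCol_ne (show (0 : Fin (m + 3)) ≠ c2 from
      Fin.ne_of_val_ne (by rw [hc2v]; simp)), ← hc1def, Matrix.updateCol_self,
      Pi.single_apply]
  set M₁ : Matrix (Fin (m + 2)) (Fin (m + 2)) ℝ := M.submatrix r1.succAbove Fin.succ with hM1def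
  have step1 : M.det = (-1 : ℝ) ^ (m + 1) * M₁.det := by
    rw [Matrix.det_succ_column_zero, Finset.sum_eq_single r1]
    · rw [hM0, if_pos rfl, hr1v, hM1def]
      ring
    · intro b _ hb
      rw [hM0, if_neg hb]
      ring
    · intro hmem
      exact absurd (Finset.mem_univ r1) hmem
  have hlastsucc : (Fin.last (m + 1)).succ = c2 := by
    rw [hc2def]
    rfl
  have hM1last : ∀ i : Fin (m + 2), M₁ i (Fin.last (m + 1))
      = if i = Fin.last (m + 1) then 1 else 0 := by
    intro i
    rw [hM1def, Matrix.submatrix_apply, hlastsucc, hMdef, Matrix.updateCol_self,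
      Pi.single_apply]
    rcases eq_or_ne i (Fin.last (m + 1)) with rfl | hi
    · have h1 : ((r1.succAbove (Fin.last (m + 1))) : ℕ) = m + 2 := by
        rw [hsA, Fin.val_last, if_neg (by omega)]
      rw [if_pos (Fin.eq_of_val_eq (by rw [h1, hr2v])), if_pos rfl]
    · rw [if_neg, if_neg hi]
      intro he
      apply hi
      have hv := congrArg Fin.val he
      rw [hsA, hr2v] at hv
      rcases Nat.lt_or_ge (i : ℕ) (m + 1) with hlt | hge
      · rw [if_pos hlt] at hv
        omega
      · rw [if_neg (by omega)] at hv
        exact Fin.eq_of_val_eq (by rw [Fin.val_last]; omega)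
  have step2 : M₁.det
      = (M₁.submatrix (Fin.last (m + 1)).succAbove (Fin.last (m + 1)).succAbove).det := by
    rw [Matrix.det_succ_column M₁ (Fin.last (m + 1)), Finset.sum_eq_single (Fin.last (m + 1))]
    · rw [hM1last, if_pos rfl, Fin.val_last]
      have hpow : (-1 : ℝ) ^ ((m + 1) + (m + 1)) = 1 := by
        rw [← two_mul, pow_mul]
        norm_num
      rw [hpow]
      ring
    · intro b _ hb
      rw [hM1last, if_neg hb]
      ring
    · intro hmem
      exact absurd (Finset.mem_univ _) hmem
  have step3 : (M₁.submatrix (Fin.last (m + 1)).succAbove (Fin.last (m + 1)).succAbove).det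
      = Hk c 1 (m + 1) := by
    rw [Hk]
    congr 1
    ext i j
    rw [Fin.succAbove_last, Matrix.submatrix_apply, hM1def, Matrix.submatrix_apply, hMdef,
      Matrix.of_apply]
    have hrow : ((r1.succAbove i.castSucc) : ℕ) = (i : ℕ) := by
      rw [hsA, Fin.coe_castSucc, if_pos (by omega)]
    rw [Matrix.updateCol_ne (show (j.castSucc).succ ≠ c2 from
        Fin.ne_of_val_ne (by rw [hc2v, Fin.val_succ, Fin.coe_castSucc]; omega)),
      Matrix.updateCol_ne (show (j.castSucc).succ ≠ c1 from
        Fin.ne_of_val_ne (by rw [hc1v, Fin.val_succ]; omega)),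
      hAapp, if_neg (by rw [hrow]; omega)]
    congr 1
    rw [hrow, Fin.val_succ, Fin.coe_castSucc]
    omega
  have hD : M.det = (-1 : ℝ) ^ (m + 1) * Hk c 1 (m + 1) := by
    rw [step1, step2, step3]
  have ha1 : adjugate A c1 r1 = (-1 : ℝ) ^ (m + 1) * Ek c 1 (m + 2) := by
    rw [Matrix.adjugate_fin_succ_eq_det_submatrix, hEk1, hr1v, hc1v]
  have ha2 : adjugate A c2 r2 = Hk c 0 (m + 2) := by
    rw [Matrix.adjugate_fin_succ_eq_det_submatrix, hHk0, hr2v]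
    have hpow : (-1 : ℝ) ^ ((m + 2) + (m + 2)) = 1 := by
      rw [← two_mul, pow_mul]
      norm_num
    rw [hpow, one_mul]
  have ha3 : adjugate A c2 r1 = -Ek c 0 (m + 2) := by
    rw [Matrix.adjugate_fin_succ_eq_det_submatrix, hEk0, hr1v, hc2v]
    have hpow : (-1 : ℝ) ^ ((m + 1) + (m + 2)) = -1 := Odd.neg_one_pow ⟨m + 1, by ring⟩
    rw [hpow]
    ring
  have ha4 : adjugate A c1 r2 = -((-1 : ℝ) ^ (m + 1)) * Hk c 1 (m + 2) := by
    rw [Matrix.adjugate_fin_succ_eq_det_submatrix, hHk1, hr2v, hc1v]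
    have hpow : (-1 : ℝ) ^ ((m + 2) + 0) = -((-1 : ℝ) ^ (m + 1)) := by
      rw [Nat.add_zero, pow_succ]
      ring
    rw [hpow]
  have key := jacobi_ring A r1 r2 c1 c2 hcc
  rw [ha1, ha2, ha3, ha4, hG, ← hMdef, hD] at key
  show Ek c 1 (m + 2) * Hk c 0 (m + 2) - Ek c 0 (m + 2) * Hk c 1 (m + 2)
      = Gk c 0 (m + 3) * Hk c 1 (m + 1)
  apply mul_left_cancel₀ (show ((-1 : ℝ) ^ (m + 1)) ≠ 0 from pow_ne_zero _ (by norm_num))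
  linear_combination key
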